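/- Let E ⊆ ℝⁿ, and suppose f : E → ℝ^D satisfies: for every dyadic cube Q intersecting E there is an affine map A_Q with |f(x) − A_Q(x)| < ρ·diam(Q) for all x ∈ 3Q ∩ E, the least singular value σ(A_Q') ≥ ε_σ and operator norm |A_Q'| ≤ M, where ρ < ε_σ/(12√n). Then f is bi-Lipschitz on E: for all distinct x, y ∈ E, (ε_σ/2)·|x−y| ≤ |f(x)−f(y)| ≤ (M + ε_σ/2)·|x−y|. -/
import Mathlib


open Metric

/-- The dyadic cube of sidelength `2^j` with lower corner `2^j • k`. -/
def dyadicCube (n : ℕ) (j : ℤ) (k : Fin n → ℤ) : Set (EuclideanSpace ℝ (Fin n)) :=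
  {x | ∀ i, (k i : ℝ) * (2:ℝ) ^ j ≤ x i ∧ x i < ((k i : ℝ) + 1) * (2:ℝ) ^ j}

/-- The center of the dyadic cube. -/
noncomputable def dyadicCenter (n : ℕ) (j : ℤ) (k : Fin n → ℤ) :
    EuclideanSpace ℝ (Fin n) :=
  (WithLp.equiv 2 (Fin n → ℝ)).symm fun i => ((k i : ℝ) + 1 / 2) * (2:ℝ) ^ j

/-- The concentric cube `3Q` with three times the sidelength. -/
noncomputable def dyadicTriple (n : ℕ) (j : ℤ) (k : Fin n → ℤ) :
    Set (EuclideanSpace ℝ (Fin n)) :=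
  {x | ∀ i, |x i - dyadicCenter n j k i| ≤ (3 / 2) * (2:ℝ) ^ j}

lemma abs_coord_le_norm {n : ℕ} (v : EuclideanSpace ℝ (Fin n)) (i : Fin n) :
    |v i| ≤ ‖v‖ := by
  rw [EuclideanSpace.norm_eq]
  have h1 : |v i| = Real.sqrt (‖v i‖ ^ 2) := by
    rw [Real.sqrt_sq_eq_abs, Real.norm_eq_abs, abs_abs]
  rw [h1]
  apply Real.sqrt_le_sqrt
  exact Finset.single_le_sum (fun j _ => sq_nonneg ‖v j‖) (Finset.mem_univ i)


/-- A Reifenberg flat function (without the coherence condition on neighbouring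
cubes) is bi-Lipschitz on `E`: if on every dyadic cube `Q` meeting `E` the function
`f` is `ρ·diam Q`-approximated on `3Q ∩ E` by an affine map whose linear part has
smallest singular value at least `ε_σ` and operator norm at most `M`, and
`ρ < ε_σ/(12√n)`, then `(ε_σ/2)|x−y| ≤ |f(x)−f(y)| ≤ (M+ε_σ/2)|x−y|` on `E`.
Affine maps are encoded as pairs `(linear part, constant part)`. -/
theorem bilipschitz_of_reifenberg_flat
    {n D : ℕ} (E : Set (EuclideanSpace ℝ (Fin n)))
    (f : EuclideanSpace ℝ (Fin n) → EuclideanSpace ℝ (Fin D))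
    (ρ εσ M : ℝ) (hεσ : 0 < εσ) (hM : 0 < M) (hρ0 : 0 ≤ ρ)
    (hρ : ρ < εσ / (12 * Real.sqrt n))
    (A : ℤ → (Fin n → ℤ) →
      (EuclideanSpace ℝ (Fin n) →L[ℝ] EuclideanSpace ℝ (Fin D)) × EuclideanSpace ℝ (Fin D))
    (hA : ∀ (j : ℤ) (k : Fin n → ℤ), (dyadicCube n j k ∩ E).Nonempty →
      (∀ x ∈ dyadicTriple n j k ∩ E,
          ‖f x - ((A j k).1 x + (A j k).2)‖ < ρ * (Real.sqrt n * (2:ℝ) ^ j)) ∧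
      (∀ v, εσ * ‖v‖ ≤ ‖(A j k).1 v‖) ∧ ‖(A j k).1‖ ≤ M) :
    ∀ x ∈ E, ∀ y ∈ E, x ≠ y →
      εσ / 2 * ‖x - y‖ ≤ ‖f x - f y‖ ∧ ‖f x - f y‖ ≤ (M + εσ / 2) * ‖x - y‖ := by
  intro x hx y hy hxy
  -- n = 0 is impossible since x ≠ y
  rcases Nat.eq_zero_or_pos n with hn | hn
  · exact absurd (by subst hn; ext i; exact absurd i.2 (by simp)) hxy
  have hd : (0:ℝ) < ‖x - y‖ := by
    rw [norm_pos_iff]; exact sub_ne_zero.mpr hxy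
  -- choose the scale j
  set j : ℤ := Int.log 2 ‖x - y‖ + 1 with hj
  have h2j : (0:ℝ) < (2:ℝ) ^ j := zpow_pos (by norm_num) _
  have hle : ‖x - y‖ ≤ (2:ℝ) ^ j := by
    have := Int.lt_zpow_succ_log_self (b := 2) (by norm_num) ‖x - y‖
    push_cast at this ⊢
    exact this.le
  have hlt : (2:ℝ) ^ j ≤ 2 * ‖x - y‖ := by
    have h := Int.zpow_log_le_self (b := 2) (by norm_num) hd
    have : ((2:ℝ)) ^ j = 2 * (2:ℝ) ^ (Int.log 2 ‖x - y‖) := by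
      rw [hj, zpow_add_one₀ (by norm_num : (2:ℝ) ≠ 0)]; ring
    rw [this]
    push_cast at h
    linarith
  -- the dyadic cube containing x at scale j
  set k : Fin n → ℤ := fun i => ⌊x i / (2:ℝ) ^ j⌋ with hk
  have hxQ : x ∈ dyadicCube n j k := by
    intro i
    constructor
    · rw [hk]
      have := Int.floor_le (x i / (2:ℝ) ^ j)
      calc (↑⌊x i / (2:ℝ) ^ j⌋ : ℝ) * (2:ℝ) ^ j ≤ (x i / (2:ℝ) ^ j) * (2:ℝ) ^ j :=
            mul_le_mul_of_nonneg_right this h2j.le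
        _ = x i := by field_simp
    · rw [hk]
      have := Int.lt_floor_add_one (x i / (2:ℝ) ^ j)
      calc x i = (x i / (2:ℝ) ^ j) * (2:ℝ) ^ j := by field_simp
        _ < (↑⌊x i / (2:ℝ) ^ j⌋ + 1) * (2:ℝ) ^ j := by
            exact mul_lt_mul_of_pos_right this h2j
  have hcenter : ∀ i, |x i - dyadicCenter n j k i| ≤ (1 / 2) * (2:ℝ) ^ j := by
    intro i
    have h1 := (hxQ i).1
    have h2 := (hxQ i).2
    have hc : dyadicCenter n j k i = ((k i : ℝ) + 1 / 2) * (2:ℝ) ^ j := rfl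
    rw [hc, abs_le]
    constructor <;> nlinarith
  have hxT : x ∈ dyadicTriple n j k := by
    intro i
    calc |x i - dyadicCenter n j k i| ≤ (1 / 2) * (2:ℝ) ^ j := hcenter i
      _ ≤ (3 / 2) * (2:ℝ) ^ j := by linarith
  have hyT : y ∈ dyadicTriple n j k := by
    intro i
    have h1 : |y i - x i| ≤ ‖x - y‖ := by
      have := abs_coord_le_norm (x - y) i
      rw [abs_sub_comm]
      simpa using this
    calc |y i - dyadicCenter n j k i|
        ≤ |y i - x i| + |x i - dyadicCenter n j k i| := abs_sub_le _ _ _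
      _ ≤ ‖x - y‖ + (1 / 2) * (2:ℝ) ^ j := add_le_add h1 (hcenter i)
      _ ≤ (2:ℝ) ^ j + (1 / 2) * (2:ℝ) ^ j := by linarith
      _ = (3 / 2) * (2:ℝ) ^ j := by ring
  obtain ⟨happrox, hsing, hnorm⟩ := hA j k ⟨x, hxQ, hx⟩
  set T := (A j k).1
  set b := (A j k).2
  have hex := happrox x ⟨hxT, hx⟩
  have hey := happrox y ⟨hyT, hy⟩
  -- error bound
  have hsqrt : (0:ℝ) < Real.sqrt n := Real.sqrt_pos.mpr (by exact_mod_cast hn)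
  have hρ' : ρ * (Real.sqrt n * (2:ℝ) ^ j) ≤ εσ / 12 * (2:ℝ) ^ j := by
    have : ρ * Real.sqrt n ≤ εσ / 12 := by
      have h12 : (0:ℝ) < 12 * Real.sqrt n := by positivity
      have := (lt_div_iff₀ h12).mp hρ
      nlinarith
    nlinarith
  have herr : ρ * (Real.sqrt n * (2:ℝ) ^ j) ≤ εσ / 6 * ‖x - y‖ := by
    calc ρ * (Real.sqrt n * (2:ℝ) ^ j) ≤ εσ / 12 * (2:ℝ) ^ j := hρ'
      _ ≤ εσ / 12 * (2 * ‖x - y‖) := by nlinarith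
      _ = εσ / 6 * ‖x - y‖ := by ring
  have hdecomp : f x - f y = T (x - y) + ((f x - (T x + b)) - (f y - (T y + b))) := by
    rw [map_sub]; abel
  have hEbd : ‖(f x - (T x + b)) - (f y - (T y + b))‖ ≤ εσ / 3 * ‖x - y‖ := by
    calc ‖(f x - (T x + b)) - (f y - (T y + b))‖
        ≤ ‖f x - (T x + b)‖ + ‖f y - (T y + b)‖ := norm_sub_le _ _
      _ ≤ εσ / 6 * ‖x - y‖ + εσ / 6 * ‖x - y‖ :=
          add_le_add (hex.le.trans herr) (hey.le.trans herr)
      _ = εσ / 3 * ‖x - y‖ := by ring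
  constructor
  · have h1 : ‖T (x - y)‖ ≤ ‖f x - f y‖ + ‖(f x - (T x + b)) - (f y - (T y + b))‖ := by
      calc ‖T (x - y)‖ = ‖(f x - f y) - ((f x - (T x + b)) - (f y - (T y + b)))‖ := by
            rw [hdecomp]; congr 1; abel
        _ ≤ _ := norm_sub_le _ _
    have h2 := hsing (x - y)
    nlinarith
  · have h1 : ‖T (x - y)‖ ≤ M * ‖x - y‖ := T.le_of_opNorm_le hnorm _
    calc ‖f x - f y‖ ≤ ‖T (x - y)‖ + ‖(f x - (T x + b)) - (f y - (T y + b))‖ := by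
          rw [hdecomp]; exact norm_add_le _ _
      _ ≤ M * ‖x - y‖ + εσ / 3 * ‖x - y‖ := add_le_add h1 hEbd
      _ ≤ (M + εσ / 2) * ‖x - y‖ := by nlinarith
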